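/- If f : ℝ → ℝ satisfies f(x - f(x) + f(y)) = f(y) for all x, y ∈ ℝ, the range of x ↦ x - f(x) equals (-1,0], and the range of f contains an integer, then f(x) = ⌈x⌉ for all x ∈ ℝ. -/

import Mathlib

theorem ceil_characterization (f : ℝ → ℝ)
    (h1 : ∀ x y : ℝ, f (x - f x + f y) = f y)
    (h2 : Set.range (fun x : ℝ => x - f x) = Set.Ioc (-1:ℝ) 0)
    (h3 : ∃ x : ℝ, ∃ n : ℤ, f x = n) :
    ∀ x : ℝ, f x = ⌈x⌉ := by
  have L1 : ∀ x : ℝ, x - f x ∈ Set.Ioc (-1:ℝ) 0 := by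
    intro x; rw [← h2]; exact ⟨x, rfl⟩
  have L2 : ∀ (y t : ℝ), t ∈ Set.Ioc (-1:ℝ) 0 → f (t + f y) = f y := by
    intro y t ht
    have : t ∈ Set.range (fun x : ℝ => x - f x) := h2 ▸ ht
    obtain ⟨x, hx⟩ := this
    simp only at hx
    rw [← hx]; exact h1 x y
  have L3 : ∀ y : ℝ, f (f y) = f y := by
    intro y
    have := L2 y 0 ⟨by norm_num, le_refl 0⟩
    simpa using this
  have L4 : ∀ c s : ℝ, f c = c → s ∈ Set.Ioc (c-1) c → f s = c := by
    intro c s hc hs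
    have ht : s - c ∈ Set.Ioc (-1:ℝ) 0 := ⟨by linarith [hs.1], by linarith [hs.2]⟩
    have := L2 c (s - c) ht
    rw [hc] at this
    simpa using this
  have L5 : ∀ c c' : ℝ, f c = c → f c' = c' → c' ∈ Set.Ioc (c-1) c → c' = c := by
    intro c c' hc hc' hm
    have := L4 c c' hc hm
    rw [hc'] at this; exact this
  have stepdown : ∀ c : ℝ, f c = c → f (c - 1) = c - 1 := by
    intro c hc
    have hfix : f (f (c-1)) = f (c-1) := L3 (c-1)
    have h1' := L1 (c-1)
    have hge : f (c-1) ≥ c - 1 := by linarith [h1'.2]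
    have hlt : f (c-1) < c := by linarith [h1'.1]
    rcases eq_or_lt_of_le hge with h | h
    · exact h.symm
    · have := L5 c (f (c-1)) hc hfix ⟨h, le_of_lt hlt⟩
      linarith
  have stepup : ∀ c : ℝ, f c = c → f (c + 1) = c + 1 := by
    intro c hc
    have hfix : f (f (c+1)) = f (c+1) := L3 (c+1)
    have h1' := L1 (c+1)
    have hge : f (c+1) ≥ c + 1 := by linarith [h1'.2]
    have hlt : f (c+1) < c + 2 := by linarith [h1'.1]
    rcases eq_or_lt_of_le hge with h | h
    · exact h.symm
    · exfalso
      set s := f (c+1) - 1 with hs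
      have hs1 : c < s := by simp [hs]; linarith
      have hs2 : s < c + 1 := by simp [hs]; linarith
      have hfix'' : f (f s) = f s := L3 s
      have h1'' := L1 s
      have hge'' : f s ≥ s := by linarith [h1''.2]
      have hlt'' : f s < s + 1 := by linarith [h1''.1]
      rcases eq_or_lt_of_le hge'' with he | hlt2
      · have hsfix : f s = s := he.symm
        have := L5 s c hsfix hc ⟨by linarith, le_of_lt hs1⟩
        linarith
      · have : f s = f (c+1) := L5 (f (c+1)) (f s) hfix hfix'' ⟨by linarith, by linarith⟩
        linarith
  obtain ⟨x0, n, hx0⟩ := h3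
  have hn : f (n:ℝ) = n := by rw [← hx0]; exact L3 x0
  have key : ∀ k : ℤ, f ((n:ℝ) + k) = (n:ℝ) + k := by
    intro k
    induction k using Int.induction_on with
    | zero => simpa using hn
    | succ i ih =>
      have h := stepup _ ih
      have heq : (n:ℝ) + ((i:ℤ) + 1 : ℤ) = (n:ℝ) + (i:ℤ) + 1 := by push_cast; ring
      rw [heq]; exact h
    | pred i ih =>
      have h := stepdown _ ih
      have heq : (n:ℝ) + (-(i:ℤ) - 1 : ℤ) = (n:ℝ) + (-(i:ℤ):ℤ) - 1 := by push_cast; ring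
      rw [heq]; exact h
  have hint : ∀ m : ℤ, f (m:ℝ) = m := by
    intro m
    have h := key (m - n)
    have heq : (n:ℝ) + ((m - n : ℤ):ℝ) = (m:ℝ) := by push_cast; ring
    rw [heq] at h; exact h
  intro x
  have hm : f ((⌈x⌉:ℝ)) = (⌈x⌉:ℝ) := hint ⌈x⌉
  exact L4 (⌈x⌉:ℝ) x hm ⟨by linarith [Int.ceil_lt_add_one x], Int.le_ceil x⟩
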